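/- Let P be a deterministic comparison matrix for N = 2^n players, σ a draw, and i* a player with wp(i*,P,σ) = 1. Then for every ε ∈ (0,1) there exists a set S of unordered pairs of distinct players such that wp_ε(i*,P,σ) = wp(i*, P_S(ε), σ), where P_S(ε) is obtained from P by changing, for each pair {a,b} ∈ S with winner w and loser l (P_wl = 1), the entries to P_wl = 1 − ε and P_lw = ε, and leaving all other entries unchanged. -/

import Mathlib

/-- A perfect (balanced) binary tree of depth `n` with leaves labelled by `α`. -/
inductive BT (α : Type) : ℕ → Type
  | leaf : α → BT α 0
  | node {n : ℕ} : BT α n → BT α n → BT α (n + 1)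

namespace BT

/-- The list of leaf labels, from left to right. -/
def leaves {α : Type} : ∀ {n : ℕ}, BT α n → List α
  | _, .leaf a => [a]
  | _, .node L R => L.leaves ++ R.leaves

/-- Relabel the leaves of a tree. -/
def map {α β : Type} (f : α → β) : ∀ {n : ℕ}, BT α n → BT β n
  | _, .leaf a => .leaf (f a)
  | _, .node L R => .node (L.map f) (R.map f)

end BT

/-- Two trees represent the same draw iff one can be obtained from the other by
swapping the two children subtrees at internal nodes. -/
def BTequiv {α : Type} : ∀ {n : ℕ}, BT α n → BT α n → Prop
  | 0, .leaf a, .leaf b => a = b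
  | _ + 1, .node L R, .node L' R' =>
      (BTequiv L L' ∧ BTequiv R R') ∨ (BTequiv L R' ∧ BTequiv R L')

/-- A draw: each of the `N` players occurs exactly once among the leaves. -/
def IsDraw {N n : ℕ} (t : BT (Fin N) n) : Prop :=
  ∀ i : Fin N, t.leaves.count i = 1

/-- The winning distribution of a knockout tournament: `wd P t i` is the probability
that player `i` wins the (sub)tournament with draw `t` and comparison matrix `P`. -/
noncomputable def wd {N : ℕ} (P : Fin N → Fin N → ℝ) :
    ∀ {n : ℕ}, BT (Fin N) n → Fin N → ℝ
  | _, .leaf j => fun i => if i = j then 1 else 0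
  | _, .node L R => fun i =>
      wd P L i * (∑ j, wd P R j * P i j) + wd P R i * (∑ j, wd P L j * P i j)

/-- `P` is a comparison matrix. -/
def IsCompMatrix {N : ℕ} (P : Fin N → Fin N → ℝ) : Prop :=
  ∀ i j : Fin N, i ≠ j → 0 ≤ P i j ∧ P i j ≤ 1 ∧ P i j + P j i = 1

/-- `P` is deterministic: every off-diagonal entry is 0 or 1. -/
def IsDet {N : ℕ} (P : Fin N → Fin N → ℝ) : Prop :=
  ∀ i j : Fin N, i ≠ j → P i j = 0 ∨ P i j = 1

/-- The set `𝒫(P,ε)` of ε-perturbations of `P`. -/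
def perturbs {N : ℕ} (P : Fin N → Fin N → ℝ) (ε : ℝ) : Set (Fin N → Fin N → ℝ) :=
  {P' | IsCompMatrix P' ∧ ∀ i j : Fin N, i ≠ j → |P' i j - P i j| ≤ ε}

/-- The ε-guaranteed winning probability `wp_ε(i,P,σ)`. -/
noncomputable def wpe {N n : ℕ} (i : Fin N) (P : Fin N → Fin N → ℝ) (ε : ℝ)
    (t : BT (Fin N) n) : ℝ :=
  sInf ((fun P' => wd P' t i) '' perturbs P ε)

/-- The comparison matrix of the hard `n`-round tournament `H_n` (players 0-indexed):
for `i < j`, player `i` beats player `j` iff `i = j - 2 ^ v` where `2 ^ v` is the largest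
power of 2 dividing `j` (in 0-indexed numbering). -/
noncomputable def hardP (n : ℕ) : Fin (2 ^ n) → Fin (2 ^ n) → ℝ := fun i j =>
  if i = j then 0
  else if (i : ℕ) < (j : ℕ) then
    (if (i : ℕ) + 2 ^ padicValNat 2 (j : ℕ) = (j : ℕ) then 1 else 0)
  else
    (if (j : ℕ) + 2 ^ padicValNat 2 (i : ℕ) = (i : ℕ) then 0 else 1)

/-- The tree of depth `n` whose leaves are `s, s+1, …, s + 2^n - 1` from left to right. -/
def ordTree : (n : ℕ) → ℕ → BT ℕ n
  | 0, s => .leaf s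
  | n + 1, s => .node (ordTree n s) (ordTree n (s + 2 ^ n))

/-- The identity draw, placing players `0, 1, …, 2^n - 1` on the leaves in order. -/
def idDraw (n : ℕ) : BT (Fin (2 ^ n)) n :=
  (ordTree n 0).map (fun k => ⟨k % 2 ^ n, Nat.mod_lt _ (by positivity)⟩)

/-- `f_p(x,y) = p(x+y) + (1-2p)xy`. -/
def fp (p x y : ℝ) : ℝ := p * (x + y) + (1 - 2 * p) * x * y

/-- `B_p` on trees with real leaf labels. -/
noncomputable def Bp (p : ℝ) : ∀ {n : ℕ}, BT ℝ n → ℝ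
  | _, .leaf x => x
  | _, .node L R => fp p (Bp p L) (Bp p R)

/-- Group a list into consecutive pairs. -/
def pairList {α : Type} : List α → List (α × α)
  | a :: b :: rest => (a, b) :: pairList rest
  | _ => []

/-- The first-round matches of a draw: the consecutive sibling pairs of leaves. -/
def firstPairs {α : Type} {n : ℕ} (t : BT α n) : List (α × α) := pairList t.leaves

/-- A draw is mixed (w.r.t. the set `B` of big players) if every first-round match
pairs a big player with a small player. -/
def MixedDraw {N n : ℕ} (B : Finset (Fin N)) (t : BT (Fin N) n) : Prop :=
  ∀ q ∈ firstPairs t, ((q.1 ∈ B) ↔ q.2 ∉ B)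

/-- Number of leaves labelled `1`. -/
noncomputable def ones {n : ℕ} (t : BT ℝ n) : ℕ := t.leaves.count 1

/-- All leaf labels are `0` or `1`. -/
def ZeroOne {n : ℕ} (t : BT ℝ n) : Prop := ∀ x ∈ t.leaves, x = 0 ∨ x = 1

/-- `P[kl←t]`: the matrix agreeing with `P` except `P k l = t` and `P l k = 1 - t`. -/
def updPair {N : ℕ} (P : Fin N → Fin N → ℝ) (k l : Fin N) (t : ℝ) :
    Fin N → Fin N → ℝ :=
  fun i j => if i = k ∧ j = l then t else if i = l ∧ j = k then 1 - t else P i j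

/-- Perturb a deterministic matrix: for each pair `(w, l) ∈ S` (winner first),
set `P w l = 1 - ε` and `P l w = ε`; other entries unchanged. -/
def detPerturb {N : ℕ} (P : Fin N → Fin N → ℝ) (S : Finset (Fin N × Fin N)) (ε : ℝ) :
    Fin N → Fin N → ℝ :=
  fun i j => if (i, j) ∈ S then 1 - ε else if (j, i) ∈ S then ε else P i j

/-- Swap the result of the single match between `a` and `b`. -/
def swapPair {N : ℕ} (P : Fin N → Fin N → ℝ) (a b : Fin N) : Fin N → Fin N → ℝ :=
  fun i j => if i = a ∧ j = b then P b a else if i = b ∧ j = a then P a b else P i j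

/-- The pair `(a,b)` (with `a` the winner) is crucial for `i` in `C(P,σ)`. -/
def Crucial {N n : ℕ} (P : Fin N → Fin N → ℝ) (σ : BT (Fin N) n) (i : Fin N)
    (a b : Fin N) : Prop :=
  a ≠ b ∧ P a b = 1 ∧ wd (swapPair P a b) σ i = 0

section Aux

/-- Affine functions of one real variable. -/
def Aff (f : ℝ → ℝ) : Prop := ∃ c d : ℝ, ∀ t, f t = c + d * t

lemma aff_const (c : ℝ) : Aff (fun _ => c) := ⟨c, 0, fun t => by ring⟩

lemma aff_congr {f g : ℝ → ℝ} (h : ∀ t, f t = g t) (hg : Aff g) : Aff f := by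
  obtain ⟨c, d, hcd⟩ := hg; exact ⟨c, d, fun t => (h t).trans (hcd t)⟩

lemma aff_add {f g : ℝ → ℝ} (hf : Aff f) (hg : Aff g) : Aff (fun t => f t + g t) := by
  obtain ⟨c, d, hf⟩ := hf; obtain ⟨c', d', hg⟩ := hg
  exact ⟨c + c', d + d', fun t => by simp only [hf, hg]; ring⟩

lemma aff_mul_const {f : ℝ → ℝ} (hf : Aff f) (c : ℝ) : Aff (fun t => f t * c) := by
  obtain ⟨a, d, hf⟩ := hf; exact ⟨a * c, d * c, fun t => by simp only [hf]; ring⟩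

lemma aff_const_mul {f : ℝ → ℝ} (hf : Aff f) (c : ℝ) : Aff (fun t => c * f t) := by
  obtain ⟨a, d, hf⟩ := hf; exact ⟨c * a, c * d, fun t => by simp only [hf]; ring⟩

lemma aff_sum {ι : Type*} (s : Finset ι) (f : ι → ℝ → ℝ) (hf : ∀ i ∈ s, Aff (f i)) :
    Aff (fun t => ∑ i ∈ s, f i t) := by
  classical
  induction s using Finset.induction_on with
  | empty => exact aff_congr (fun t => by simp) (aff_const 0)
  | @insert a s' h ih =>
    refine aff_congr (fun t => Finset.sum_insert h) ?_
    exact aff_add (hf a (Finset.mem_insert_self a s'))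
      (ih fun i hi => hf i (Finset.mem_insert_of_mem hi))

lemma aff_min_endpoint {f : ℝ → ℝ} (hf : Aff f) {lo hi t : ℝ}
    (h1 : lo ≤ t) (h2 : t ≤ hi) : f lo ≤ f t ∨ f hi ≤ f t := by
  obtain ⟨c, d, hf⟩ := hf
  rcases le_or_gt 0 d with hd | hd
  · left; rw [hf, hf]; nlinarith
  · right; rw [hf, hf]; nlinarith

lemma wd_leaf {N : ℕ} (P : Fin N → Fin N → ℝ) (j i : Fin N) :
    wd P (BT.leaf j) i = if i = j then 1 else 0 := rfl

lemma wd_node {N m : ℕ} (P : Fin N → Fin N → ℝ) (L R : BT (Fin N) m) (i : Fin N) :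
    wd P (BT.node L R) i =
      wd P L i * (∑ j, wd P R j * P i j) + wd P R i * (∑ j, wd P L j * P i j) := rfl

lemma leaves_node {α : Type} {m : ℕ} (L R : BT α m) :
    (BT.node L R).leaves = L.leaves ++ R.leaves := rfl

lemma wd_eq_zero {N : ℕ} (P : Fin N → Fin N → ℝ) :
    ∀ {n : ℕ} (T : BT (Fin N) n) (i : Fin N), i ∉ T.leaves → wd P T i = 0 := by
  intro n T
  induction T with
  | leaf a =>
    intro i hi
    simp only [BT.leaves, List.mem_singleton] at hi
    simp [wd_leaf, hi]
  | node L R ihL ihR =>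
    intro i hi
    simp only [leaves_node, List.mem_append] at hi
    push_neg at hi
    rw [wd_node, ihL i hi.1, ihR i hi.2]; ring

lemma mem_leaves_of_wd_ne_zero {N n : ℕ} {P : Fin N → Fin N → ℝ} {T : BT (Fin N) n}
    {i : Fin N} (h : wd P T i ≠ 0) : i ∈ T.leaves := by
  by_contra hc; exact h (wd_eq_zero P T i hc)

lemma wd_congr {N : ℕ} {P Q : Fin N → Fin N → ℝ} :
    ∀ {n : ℕ} (T : BT (Fin N) n), T.leaves.Nodup →
      (∀ x y : Fin N, x ∈ T.leaves → y ∈ T.leaves → x ≠ y → P x y = Q x y) →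
      ∀ i, wd P T i = wd Q T i := by
  intro n T
  induction T with
  | leaf a => intro _ _ i; simp [wd_leaf]
  | node L R ihL ihR =>
    intro hnd hag i
    rw [leaves_node, List.nodup_append] at hnd
    obtain ⟨hL, hR, hdisj⟩ := hnd
    have hdisj : L.leaves.Disjoint R.leaves := by
      intro x hxL hxR; exact hdisj x hxL x hxR rfl
    have hagL : ∀ x y : Fin N, x ∈ L.leaves → y ∈ L.leaves → x ≠ y → P x y = Q x y :=
      fun x y hx hy => hag x y (by simp [leaves_node, hx]) (by simp [leaves_node, hy])
    have hagR : ∀ x y : Fin N, x ∈ R.leaves → y ∈ R.leaves → x ≠ y → P x y = Q x y :=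
      fun x y hx hy => hag x y (by simp [leaves_node, hy, hx]) (by simp [leaves_node, hy])
    rw [wd_node, wd_node]
    congr 1
    · by_cases hiL : i ∈ L.leaves
      · rw [ihL hL hagL i]
        congr 1
        refine Finset.sum_congr rfl fun j _ => ?_
        by_cases hjR : j ∈ R.leaves
        · rw [ihR hR hagR j,
            hag i j (by simp [leaves_node, hiL]) (by simp [leaves_node, hjR])
              (fun hij => hdisj hiL (hij ▸ hjR))]
        · simp [wd_eq_zero P R j hjR, wd_eq_zero Q R j hjR]
      · rw [wd_eq_zero P L i hiL, wd_eq_zero Q L i hiL]; ring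
    · by_cases hiR : i ∈ R.leaves
      · rw [ihR hR hagR i]
        congr 1
        refine Finset.sum_congr rfl fun j _ => ?_
        by_cases hjL : j ∈ L.leaves
        · rw [ihL hL hagL j,
            hag i j (by simp [leaves_node, hiR]) (by simp [leaves_node, hjL])
              (fun hij => hdisj (hij ▸ hjL) hiR)]
        · simp [wd_eq_zero P L j hjL, wd_eq_zero Q L j hjL]
      · rw [wd_eq_zero P R i hiR, wd_eq_zero Q R i hiR]; ring

lemma wd_nonneg {N : ℕ} {P : Fin N → Fin N → ℝ}
    (hP : ∀ i j : Fin N, i ≠ j → 0 ≤ P i j) :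
    ∀ {n : ℕ} (T : BT (Fin N) n), T.leaves.Nodup → ∀ i, 0 ≤ wd P T i := by
  intro n T
  induction T with
  | leaf a => intro _ i; rw [wd_leaf]; positivity
  | node L R ihL ihR =>
    intro hnd i
    rw [leaves_node, List.nodup_append] at hnd
    obtain ⟨hL, hR, hdisj⟩ := hnd
    replace hdisj : L.leaves.Disjoint R.leaves := by
      intro x hxL hxR; exact hdisj x hxL x hxR rfl
    rename_i m
    rw [wd_node]
    have term : ∀ (A B : BT (Fin N) m), A.leaves.Disjoint B.leaves →
        (∀ j, 0 ≤ wd P A j) → (∀ j, 0 ≤ wd P B j) →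
        0 ≤ wd P A i * ∑ j, wd P B j * P i j := by
      intro A B hd hA hB
      by_cases hiA : i ∈ A.leaves
      · refine mul_nonneg (hA i) (Finset.sum_nonneg fun j _ => ?_)
        by_cases hjB : j ∈ B.leaves
        · exact mul_nonneg (hB j) (hP i j (fun hij => hd hiA (hij ▸ hjB)))
        · rw [wd_eq_zero P B j hjB]; simp
      · rw [wd_eq_zero P A i hiA]; simp
    exact add_nonneg
      (term L R hdisj (ihL hL) (ihR hR))
      (term R L hdisj.symm (ihR hR) (ihL hL))

end Aux
section Aff2

lemma updPair_ne {N : ℕ} (P : Fin N → Fin N → ℝ) (a b : Fin N) (t : ℝ) {i j : Fin N}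
    (h1 : ¬(i = a ∧ j = b)) (h2 : ¬(i = b ∧ j = a)) : updPair P a b t i j = P i j := by
  simp only [updPair, if_neg h1, if_neg h2]

lemma aff_updPair_entry {N : ℕ} (P : Fin N → Fin N → ℝ) (a b : Fin N) (i j : Fin N) :
    Aff (fun t => updPair P a b t i j) := by
  unfold updPair
  by_cases h1 : i = a ∧ j = b
  · exact aff_congr (fun t => by rw [if_pos h1]) ⟨0, 1, fun t => by ring⟩
  · by_cases h2 : i = b ∧ j = a
    · exact aff_congr (fun t => by rw [if_neg h1, if_pos h2]) ⟨1, -1, fun t => by ring⟩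
    · exact aff_congr (fun t => by rw [if_neg h1, if_neg h2]) (aff_const _)

lemma wd_updPair_const {N : ℕ} (P : Fin N → Fin N → ℝ) (a b : Fin N)
    {n : ℕ} {T : BT (Fin N) n} (hnd : T.leaves.Nodup)
    (h : a ∉ T.leaves ∨ b ∉ T.leaves) (t : ℝ) (i : Fin N) :
    wd (updPair P a b t) T i = wd P T i := by
  refine wd_congr T hnd (fun x y hx hy _ => ?_) i
  refine updPair_ne P a b t (fun hc => ?_) (fun hc => ?_)
  · rcases h with h | h
    · exact h (hc.1 ▸ hx)
    · exact h (hc.2 ▸ hy)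
  · rcases h with h | h
    · exact h (hc.2 ▸ hy)
    · exact h (hc.1 ▸ hx)

lemma wd_node_comm {N m : ℕ} (P : Fin N → Fin N → ℝ) (L R : BT (Fin N) m) (i : Fin N) :
    wd P (BT.node L R) i = wd P (BT.node R L) i := by
  rw [wd_node, wd_node]; ring

/-- Case: a and b both among the leaves of the left subtree. -/
lemma aff_both_left {N m : ℕ} (P : Fin N → Fin N → ℝ) (a b : Fin N) (hab : a ≠ b)
    (L R : BT (Fin N) m) (hL : L.leaves.Nodup) (hR : R.leaves.Nodup)
    (hdisj : L.leaves.Disjoint R.leaves)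
    (haL : a ∈ L.leaves) (hbL : b ∈ L.leaves)
    (ihL : ∀ i, Aff (fun t => wd (updPair P a b t) L i)) :
    ∀ i, Aff (fun t => wd (updPair P a b t) (BT.node L R) i) := by
  intro i
  have haR : a ∉ R.leaves := fun h => hdisj haL h
  have hbR : b ∉ R.leaves := fun h => hdisj hbL h
  have hRconst : ∀ (t : ℝ) (j : Fin N), wd (updPair P a b t) R j = wd P R j :=
    fun t j => wd_updPair_const P a b hR (Or.inl haR) t j
  have hsumR : ∀ t : ℝ, (∑ j, wd (updPair P a b t) R j * updPair P a b t i j)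
      = ∑ j, wd P R j * P i j := by
    intro t
    refine Finset.sum_congr rfl (fun j _ => ?_)
    rw [hRconst t j]
    by_cases hj0 : wd P R j = 0
    · rw [hj0]; ring
    · have hjR := mem_leaves_of_wd_ne_zero hj0
      rw [updPair_ne P a b t (fun hc => hbR (hc.2 ▸ hjR)) (fun hc => haR (hc.2 ▸ hjR))]
  by_cases hiR : i ∈ R.leaves
  · -- i in right subtree: i ≠ a, i ≠ b
    have hia : i ≠ a := fun h => haR (h ▸ hiR)
    have hib : i ≠ b := fun h => hbR (h ▸ hiR)
    refine aff_congr (g := fun t => wd (updPair P a b t) L i * (∑ j, wd P R j * P i j)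
        + wd P R i * (∑ j, wd (updPair P a b t) L j * P i j)) (fun t => ?_) ?_
    · rw [wd_node, hsumR t, hRconst t i]
      congr 1
      refine congrArg _ (Finset.sum_congr rfl (fun j _ => ?_))
      rw [updPair_ne P a b t (fun hc => hia hc.1) (fun hc => hib hc.1)]
    · exact aff_add (aff_mul_const (ihL i) _)
        (aff_const_mul (aff_sum Finset.univ _ (fun j _ => aff_mul_const (ihL j) _)) _)
  · refine aff_congr (g := fun t => wd (updPair P a b t) L i * (∑ j, wd P R j * P i j))
      (fun t => ?_) (aff_mul_const (ihL i) _)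
    rw [wd_node, hsumR t, hRconst t i, wd_eq_zero P R i hiR]
    ring

/-- Case: a in the left subtree, b in the right subtree. -/
lemma aff_split {N m : ℕ} (P : Fin N → Fin N → ℝ) (a b : Fin N) (hab : a ≠ b)
    (L R : BT (Fin N) m) (hL : L.leaves.Nodup) (hR : R.leaves.Nodup)
    (hdisj : L.leaves.Disjoint R.leaves)
    (haL : a ∈ L.leaves) (hbR : b ∈ R.leaves) :
    ∀ i, Aff (fun t => wd (updPair P a b t) (BT.node L R) i) := by
  intro i
  have haR : a ∉ R.leaves := fun h => hdisj haL h
  have hbL : b ∉ L.leaves := fun h => hdisj h hbR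
  have hLconst : ∀ (t : ℝ) (j : Fin N), wd (updPair P a b t) L j = wd P L j :=
    fun t j => wd_updPair_const P a b hL (Or.inr hbL) t j
  have hRconst : ∀ (t : ℝ) (j : Fin N), wd (updPair P a b t) R j = wd P R j :=
    fun t j => wd_updPair_const P a b hR (Or.inl haR) t j
  refine aff_congr (g := fun t => wd P L i * (∑ j, wd P R j * updPair P a b t i j)
      + wd P R i * (∑ j, wd P L j * updPair P a b t i j)) (fun t => ?_) ?_
  · rw [wd_node, hLconst t i, hRconst t i]
    congr 1
    · exact congrArg _ (Finset.sum_congr rfl (fun j _ => by rw [hRconst t j]))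
    · exact congrArg _ (Finset.sum_congr rfl (fun j _ => by rw [hLconst t j]))
  · exact aff_add
      (aff_const_mul (aff_sum Finset.univ _
        (fun j _ => aff_const_mul (aff_updPair_entry P a b i j) _)) _)
      (aff_const_mul (aff_sum Finset.univ _
        (fun j _ => aff_const_mul (aff_updPair_entry P a b i j) _)) _)

lemma wd_aff {N : ℕ} (P : Fin N → Fin N → ℝ) (a b : Fin N) (hab : a ≠ b) :
    ∀ {n : ℕ} (T : BT (Fin N) n), T.leaves.Nodup →
      ∀ i, Aff (fun t => wd (updPair P a b t) T i) := by
  intro n T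
  induction T with
  | leaf x =>
    intro _ i
    exact aff_congr (fun t => wd_leaf _ x i) (aff_const _)
  | node L R ihL ihR =>
    intro hnd i
    have hnd' := hnd
    rw [leaves_node, List.nodup_append] at hnd'
    obtain ⟨hL, hR, hdisj⟩ := hnd'
    have hdisj : L.leaves.Disjoint R.leaves := by
      intro x hxL hxR; exact hdisj x hxL x hxR rfl
    by_cases haT : a ∈ (BT.node L R).leaves
    · by_cases hbT : b ∈ (BT.node L R).leaves
      · rw [leaves_node, List.mem_append] at haT hbT
        rcases haT with haL | haR <;> rcases hbT with hbL | hbR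
        · exact aff_both_left P a b hab L R hL hR hdisj haL hbL (ihL hL) i
        · exact aff_split P a b hab L R hL hR hdisj haL hbR i
        · refine aff_congr (fun t => wd_node_comm _ L R i) ?_
          exact aff_split P a b hab R L hR hL hdisj.symm haR hbL i
        · refine aff_congr (fun t => wd_node_comm _ L R i) ?_
          exact aff_both_left P a b hab R L hR hL hdisj.symm haR hbR (ihR hR) i
      · exact aff_congr (fun t => wd_updPair_const P a b hnd (Or.inr hbT) t i) (aff_const _)
    · exact aff_congr (fun t => wd_updPair_const P a b hnd (Or.inl haT) t i) (aff_const _)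

end Aff2
section Vertex

lemma updPair_self {N : ℕ} {Q : Fin N → Fin N → ℝ} {a b : Fin N} (hab : a ≠ b)
    (hcomp : Q a b + Q b a = 1) : updPair Q a b (Q a b) = Q := by
  funext i j
  unfold updPair
  by_cases h1 : i = a ∧ j = b
  · rw [if_pos h1, h1.1, h1.2]
  · rw [if_neg h1]
    by_cases h2 : i = b ∧ j = a
    · rw [if_pos h2, h2.1, h2.2]; linarith
    · rw [if_neg h2]

lemma updPair_mem_perturbs {N : ℕ} {P Q : Fin N → Fin N → ℝ} {ε : ℝ}
    (hQ : Q ∈ perturbs P ε) {a b : Fin N} (hab : a ≠ b) {e : ℝ}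
    (h0 : 0 ≤ e) (h1 : e ≤ 1) (hclose : |e - P a b| ≤ ε)
    (hclose' : |(1 - e) - P b a| ≤ ε) :
    updPair Q a b e ∈ perturbs P ε := by
  obtain ⟨hQc, hQd⟩ := hQ
  constructor
  · intro i j hij
    by_cases hab1 : i = a ∧ j = b
    · obtain ⟨rfl, rfl⟩ := hab1
      have v1 : updPair Q i j e i j = e := by simp [updPair]
      have v2 : updPair Q i j e j i = 1 - e := by
        simp [updPair, hij, Ne.symm hij]
      rw [v1, v2]
      exact ⟨h0, h1, by ring⟩
    · by_cases hab2 : i = b ∧ j = a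
      · obtain ⟨rfl, rfl⟩ := hab2
        have v1 : updPair Q j i e i j = 1 - e := by
          simp [updPair, hij, Ne.symm hij]
        have v2 : updPair Q j i e j i = e := by simp [updPair]
        rw [v1, v2]
        exact ⟨by linarith, by linarith, by ring⟩
      · have hba1 : ¬(j = a ∧ i = b) := fun hc => hab2 ⟨hc.2, hc.1⟩
        have hba2 : ¬(j = b ∧ i = a) := fun hc => hab1 ⟨hc.2, hc.1⟩
        rw [updPair_ne Q a b e hab1 hab2, updPair_ne Q a b e hba1 hba2]
        exact hQc i j hij
  · intro i j hij
    by_cases hab1 : i = a ∧ j = b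
    · obtain ⟨rfl, rfl⟩ := hab1
      have v1 : updPair Q i j e i j = e := by simp [updPair]
      rw [v1]; exact hclose
    · by_cases hab2 : i = b ∧ j = a
      · obtain ⟨rfl, rfl⟩ := hab2
        have v1 : updPair Q j i e i j = 1 - e := by
          simp [updPair, hij, Ne.symm hij]
        rw [v1]; exact hclose'
      · rw [updPair_ne Q a b e hab1 hab2]
        exact hQd i j hij

lemma vertex_reduce {N n : ℕ} (P : Fin N → Fin N → ℝ) (hP : IsCompMatrix P)
    (hdet : IsDet P) (σ : BT (Fin N) n) (hnd : σ.leaves.Nodup) (istar : Fin N)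
    {ε : ℝ} (hε0 : 0 < ε) (hε1 : ε < 1) (F : Finset (Fin N × Fin N)) :
    ∀ P' ∈ perturbs P ε, ∃ P'' ∈ perturbs P ε,
      wd P'' σ istar ≤ wd P' σ istar ∧
      ∀ r ∈ F, r.1 ≠ r.2 →
        (P'' r.1 r.2 = (if P r.1 r.2 = 1 then 1 - ε else 0) ∨
         P'' r.1 r.2 = (if P r.1 r.2 = 1 then 1 else ε)) := by
  classical
  induction F using Finset.induction_on with
  | empty => intro P' hP'; exact ⟨P', hP', le_refl _, by simp⟩
  | @insert q F hq ih =>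
    intro P' hP'
    obtain ⟨Q, hQ, hle, hcond⟩ := ih P' hP'
    by_cases hq12 : q.1 = q.2
    · refine ⟨Q, hQ, hle, fun r hr hr12 => ?_⟩
      rcases Finset.mem_insert.mp hr with h | h
      · subst h; exact absurd hq12 hr12
      · exact hcond r h hr12
    · set a := q.1 with ha
      set b := q.2 with hb
      have hab : a ≠ b := hq12
      have hPba : P b a = 1 - P a b := by
        have := (hP a b hab).2.2; linarith
      set lo : ℝ := if P a b = 1 then 1 - ε else 0 with hlo
      set hi : ℝ := if P a b = 1 then 1 else ε with hhi
      have hPab : P a b = 0 ∨ P a b = 1 := hdet a b hab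
      have key : (lo = 0 ∧ hi = ε ∧ P a b = 0) ∨ (lo = 1 - ε ∧ hi = 1 ∧ P a b = 1) := by
        rcases hPab with h | h
        · left; refine ⟨?_, ?_, h⟩ <;> simp [hlo, hhi, h]
        · right; refine ⟨?_, ?_, h⟩ <;> simp [hlo, hhi, h]
      have hrange : lo ≤ Q a b ∧ Q a b ≤ hi := by
        have hc := hQ.1 a b hab
        have hd := abs_le.mp (hQ.2 a b hab)
        rcases key with ⟨hl, hh, hp⟩ | ⟨hl, hh, hp⟩ <;> rw [hl, hh] <;>
          constructor <;> linarith [hc.1, hc.2.1, hd.1, hd.2]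
      have hend : ∃ e : ℝ, (e = lo ∨ e = hi) ∧
          wd (updPair Q a b e) σ istar ≤ wd Q σ istar := by
        have haff := wd_aff Q a b hab σ hnd istar
        have := aff_min_endpoint haff hrange.1 hrange.2
        rw [updPair_self hab (hQ.1 a b hab).2.2] at this
        rcases this with h | h
        · exact ⟨lo, Or.inl rfl, h⟩
        · exact ⟨hi, Or.inr rfl, h⟩
      obtain ⟨e, hee, hewd⟩ := hend
      have hbnd : 0 ≤ e ∧ e ≤ 1 ∧ |e - P a b| ≤ ε := by
        rcases key with ⟨hl, hh, hp⟩ | ⟨hl, hh, hp⟩ <;> rcases hee with rfl | rfl <;>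
          simp only [hl, hh, hp, abs_le] <;>
          refine ⟨by linarith, by linarith, by constructor <;> linarith⟩
      have hmem : updPair Q a b e ∈ perturbs P ε := by
        refine updPair_mem_perturbs hQ hab hbnd.1 hbnd.2.1 hbnd.2.2 ?_
        rw [hPba]
        have : |(1 - e) - (1 - P a b)| = |e - P a b| := by
          rw [show (1 - e) - (1 - P a b) = -(e - P a b) by ring, abs_neg]
        rw [this]; exact hbnd.2.2
      refine ⟨updPair Q a b e, hmem, le_trans hewd hle, ?_⟩
      intro r hr hr12
      rcases Finset.mem_insert.mp hr with h | h
      · subst h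
        have v : updPair Q a b e a b = e := by simp [updPair]
        show updPair Q a b e a b = (if P a b = 1 then 1 - ε else 0) ∨
            updPair Q a b e a b = (if P a b = 1 then 1 else ε)
        rw [v, ← hlo, ← hhi]
        exact hee
      · -- r ∈ F
        by_cases hr1 : r.1 = b ∧ r.2 = a
        · have v1 : updPair Q a b e r.1 r.2 = 1 - e := by
            simp [updPair, hr1.1, hr1.2, hab, Ne.symm hab]
          rw [v1, hr1.1, hr1.2, hPba]
          rcases key with ⟨hl, hh, hp⟩ | ⟨hl, hh, hp⟩ <;> rcases hee with rfl | rfl <;>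
            simp only [hl, hh, hp]
          all_goals try norm_num
          all_goals first | (left; ring) | (right; ring)
        · have hr2 : ¬(r.1 = a ∧ r.2 = b) := by
            intro hc
            apply hq
            have : r = q := Prod.ext hc.1 hc.2
            exact this ▸ h
          rw [updPair_ne Q a b e hr2 hr1]
          exact hcond r h hr12

end Vertex
section Main

lemma detPerturb_mem_perturbs {N : ℕ} {P : Fin N → Fin N → ℝ} (hP : IsCompMatrix P)
    {S : Finset (Fin N × Fin N)} (hS : ∀ q ∈ S, q.1 ≠ q.2 ∧ P q.1 q.2 = 1)
    {ε : ℝ} (hε0 : 0 < ε) (hε1 : ε < 1) : detPerturb P S ε ∈ perturbs P ε := by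
  have hnot : ∀ i j : Fin N, (i, j) ∈ S → (j, i) ∉ S := by
    intro i j hij hji
    have h1 := (hS _ hij).2
    have h2 := (hS _ hji).2
    have h3 := (hP i j (hS _ hij).1).2.2
    simp only at h1 h2
    rw [h1, h2] at h3
    norm_num at h3
  constructor
  · intro i j hij
    unfold detPerturb
    by_cases h1 : (i, j) ∈ S
    · rw [if_pos h1]
      rw [if_neg (hnot i j h1), if_pos h1]
      exact ⟨by linarith, by linarith, by ring⟩
    · rw [if_neg h1]
      by_cases h2 : (j, i) ∈ S
      · rw [if_pos h2, if_pos h2]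
        exact ⟨le_of_lt hε0, by linarith, by ring⟩
      · rw [if_neg h2, if_neg h2, if_neg h1]
        exact hP i j hij
  · intro i j hij
    unfold detPerturb
    by_cases h1 : (i, j) ∈ S
    · rw [if_pos h1, (hS _ h1).2]
      rw [show (1 - ε - 1 : ℝ) = -ε by ring, abs_neg, abs_of_pos hε0]
    · rw [if_neg h1]
      by_cases h2 : (j, i) ∈ S
      · rw [if_pos h2]
        have hji1 := (hS _ h2).2
        simp only at hji1
        have hcomp := (hP i j hij).2.2
        have : P i j = 0 := by linarith
        rw [this, sub_zero, abs_of_pos hε0]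
      · rw [if_neg h2]
        simp [le_of_lt hε0]

theorem det_worst_perturbation_form' (n N : ℕ)
    (P : Fin N → Fin N → ℝ) (hP : IsCompMatrix P) (hdet : IsDet P)
    (σ : BT (Fin N) n) (hσ : IsDraw σ)
    (istar : Fin N)
    (ε : ℝ) (hε : ε ∈ Set.Ioo (0 : ℝ) 1) :
    ∃ S : Finset (Fin N × Fin N),
      (∀ q ∈ S, q.1 ≠ q.2 ∧ P q.1 q.2 = 1) ∧
      wpe istar P ε σ = wd (detPerturb P S ε) σ istar := by
  classical
  obtain ⟨hε0, hε1⟩ := hε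
  have hnd : σ.leaves.Nodup :=
    List.nodup_iff_count_le_one.mpr (fun a => le_of_eq (hσ a))
  set T : Finset (Fin N × Fin N) :=
    Finset.univ.filter (fun q => q.1 ≠ q.2 ∧ P q.1 q.2 = 1) with hT
  have hTne : T.powerset.Nonempty := ⟨∅, Finset.mem_powerset.mpr (Finset.empty_subset T)⟩
  obtain ⟨S₀, hS₀mem, hS₀min⟩ := Finset.exists_min_image T.powerset
    (fun S => wd (detPerturb P S ε) σ istar) hTne
  have hS₀cond : ∀ q ∈ S₀, q.1 ≠ q.2 ∧ P q.1 q.2 = 1 := fun q hq =>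
    (Finset.mem_filter.mp (Finset.mem_powerset.mp hS₀mem hq)).2
  have hS₀pert := detPerturb_mem_perturbs hP hS₀cond hε0 hε1
  refine ⟨S₀, hS₀cond, ?_⟩
  unfold wpe
  apply le_antisymm
  · refine csInf_le ⟨0, ?_⟩ ⟨_, hS₀pert, rfl⟩
    rintro y ⟨P', hP', rfl⟩
    exact wd_nonneg (fun i j hij => (hP'.1 i j hij).1) σ hnd istar
  · refine le_csInf ⟨wd P σ istar, P, ⟨hP, fun i j hij => by simp [le_of_lt hε0]⟩, rfl⟩ ?_
    rintro y ⟨P', hP', rfl⟩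
    obtain ⟨P'', hP''pert, hP''le, hP''cond⟩ :=
      vertex_reduce P hP hdet σ hnd istar hε0 hε1 Finset.univ P' hP'
    set S : Finset (Fin N × Fin N) :=
      Finset.univ.filter (fun q => q.1 ≠ q.2 ∧ P q.1 q.2 = 1 ∧ P'' q.1 q.2 = 1 - ε)
      with hSdef
    have hSsub : S ∈ T.powerset := by
      refine Finset.mem_powerset.mpr (fun q hq => ?_)
      have := (Finset.mem_filter.mp hq).2
      exact Finset.mem_filter.mpr ⟨Finset.mem_univ q, this.1, this.2.1⟩
    have hagree : ∀ x y : Fin N, x ≠ y → detPerturb P S ε x y = P'' x y := by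
      intro x y hxy
      have condxy := hP''cond (x, y) (Finset.mem_univ _) hxy
      have condyx := hP''cond (y, x) (Finset.mem_univ _) hxy.symm
      simp only at condxy condyx
      have hcompP := (hP x y hxy).2.2
      have hcompP'' := (hP''pert.1 x y hxy).2.2
      have hmemS : ∀ u v : Fin N,
          ((u, v) ∈ S ↔ u ≠ v ∧ P u v = 1 ∧ P'' u v = 1 - ε) := by
        intro u v
        rw [hSdef, Finset.mem_filter]
        simp
      unfold detPerturb
      by_cases h1 : (x, y) ∈ S
      · rw [if_pos h1]
        exact ((hmemS x y).mp h1).2.2.symm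
      · rw [if_neg h1]
        by_cases h2 : (y, x) ∈ S
        · rw [if_pos h2]
          have := ((hmemS y x).mp h2).2.2
          linarith
        · rw [if_neg h2]
          rcases hdet x y hxy with h0 | h1'
          · -- P x y = 0, so P y x = 1
            have hyx1 : P y x = 1 := by linarith
            have hyxne : P'' y x ≠ 1 - ε := fun hc =>
              h2 ((hmemS y x).mpr ⟨hxy.symm, hyx1, hc⟩)
            rw [hyx1] at condyx; norm_num at condyx
            have : P'' y x = 1 := by
              rcases condyx with h | h
              · exact absurd h hyxne
              · exact h
            rw [h0]; linarith
          · have hxyne : P'' x y ≠ 1 - ε := fun hc =>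
              h1 ((hmemS x y).mpr ⟨hxy, h1', hc⟩)
            rw [h1'] at condxy; norm_num at condxy
            rcases condxy with h | h
            · exact absurd h hxyne
            · rw [h1', h]
    have heq : wd (detPerturb P S ε) σ istar = wd P'' σ istar :=
      wd_congr σ hnd (fun x y _ _ hxy => hagree x y hxy) istar
    calc wd (detPerturb P S₀ ε) σ istar
        ≤ wd (detPerturb P S ε) σ istar := hS₀min S hSsub
      _ = wd P'' σ istar := heq
      _ ≤ wd P' σ istar := hP''le

end Main

/-- for a deterministic tournament won by `i*`, the worst
ε-perturbation can be chosen to change some set `S` of matches from `(0,1)` to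
`(ε, 1-ε)` and leave everything else intact. -/
theorem det_worst_perturbation_form (n : ℕ)
    (P : Fin (2 ^ n) → Fin (2 ^ n) → ℝ) (hP : IsCompMatrix P) (hdet : IsDet P)
    (σ : BT (Fin (2 ^ n)) n) (hσ : IsDraw σ)
    (istar : Fin (2 ^ n)) (hwin : wd P σ istar = 1)
    (ε : ℝ) (hε : ε ∈ Set.Ioo (0 : ℝ) 1) :
    ∃ S : Finset (Fin (2 ^ n) × Fin (2 ^ n)),
      (∀ q ∈ S, q.1 ≠ q.2 ∧ P q.1 q.2 = 1) ∧
      wpe istar P ε σ = wd (detPerturb P S ε) σ istar := by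
  exact det_worst_perturbation_form' n (2 ^ n) P hP hdet σ hσ istar ε hε
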